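/- Let g : [n]^ℓ → ℝ be a function with ‖g‖₁ = 1 (i.e., the sum of |g(x)| over all x equals 1) whose support has size at most k. Then there exists a subset U ⊆ [ℓ] with |U| ≤ log₂ k and values α_i ∈ [n] for i ∈ U such that |∑_{x : x_i = α_i for all i ∈ U} g(x)| ≥ k^{-C log k} for some absolute constant C. -/

import Mathlib

open Finset

private lemma key : ∀ m : ℕ, ∀ (n ℓ : ℕ) (h : (Fin ℓ → Fin n) → ℝ),
    (Finset.univ.filter fun x => h x ≠ 0).card = m → 1 ≤ m →
    ∃ (U : Finset (Fin ℓ)) (α : Fin ℓ → Fin n),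
      U.card ≤ Nat.log 2 m ∧
      (∑ x : Fin ℓ → Fin n, |h x|) / ((4 * m : ℝ)) ^ (Nat.log 2 m) ≤
        |∑ x ∈ Finset.univ.filter (fun x => ∀ i ∈ U, x i = α i), h x| := by
  intro m
  induction m using Nat.strong_induction_on with
  | _ m IH =>
  intro n ℓ h hTc hm1
  set T : Finset (Fin ℓ → Fin n) := Finset.univ.filter fun x => h x ≠ 0 with hTdef
  have hTne : T.Nonempty := Finset.card_pos.mp (by omega)
  obtain ⟨y, hyT⟩ := hTne
  set M : ℝ := ∑ x : Fin ℓ → Fin n, |h x| with hMdef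
  have habs_supp : ∑ x ∈ T, |h x| = M := by
    apply Finset.sum_subset (Finset.subset_univ T)
    intro x _ hx
    simp only [hTdef, mem_filter, mem_univ, true_and, not_not] at hx
    simp [hx]
  have hsum_supp : ∑ x ∈ T, h x = ∑ x : Fin ℓ → Fin n, h x := by
    apply Finset.sum_subset (Finset.subset_univ T)
    intro x _ hx
    simp only [hTdef, mem_filter, mem_univ, true_and, not_not] at hx
    exact hx
  have hMpos : 0 < M := by
    rw [← habs_supp]
    apply Finset.sum_pos _ ⟨y, hyT⟩
    intro x hx
    simp only [hTdef, mem_filter, mem_univ, true_and] at hx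
    exact abs_pos.mpr hx
  set L : ℕ := Nat.log 2 m with hLdef
  have hmR1 : (1:ℝ) ≤ (m:ℝ) := by exact_mod_cast hm1
  have hden_pos : (0:ℝ) < (4 * m) ^ L := by positivity
  set S : ℝ := ∑ x : Fin ℓ → Fin n, h x with hSdef
  by_cases hS : M / (4 * m) ^ L ≤ |S|
  · refine ⟨∅, y, by simp, ?_⟩
    have hfe : (Finset.univ.filter fun x : Fin ℓ → Fin n => ∀ i ∈ (∅ : Finset (Fin ℓ)), x i = y i)
        = Finset.univ := by
      apply Finset.filter_true_of_mem; intro x _; simp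
    rw [hfe]
    exact hS
  · push_neg at hS
    rcases eq_or_lt_of_le hm1 with hm1' | hm2
    · exfalso
      obtain ⟨z, hz⟩ := Finset.card_eq_one.mp (hTc.trans hm1'.symm)
      have hSz : S = h z := by rw [← hsum_supp, hz, Finset.sum_singleton]
      have hMz : M = |h z| := by rw [← habs_supp, hz, Finset.sum_singleton]
      have hMle : M / (4 * m) ^ L ≤ M := by
        rw [div_le_iff₀ hden_pos]
        nlinarith [one_le_pow₀ (show (1:ℝ) ≤ 4 * m by nlinarith) (n := L)]
      rw [hSz, ← hMz] at hS
      linarith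
    · have hm2' : 2 ≤ m := hm2
      have hL1 : 1 ≤ L := Nat.log_pos (by norm_num) hm2'
      have hclaim : ∃ (i : Fin ℓ) (a : Fin n),
          2 * (T.filter fun x => x i = a).card ≤ m ∧
          M / (4 * m) ≤ ∑ x ∈ T.filter (fun x => x i = a), |h x| := by
        by_contra hc
        push_neg at hc
        have hlight : ∀ y' ∈ T, (∃ i, 2 * (T.filter fun x => x i = y' i).card ≤ m) →
            |h y'| < M / (4 * m) := by
          rintro y' hy' ⟨i, hi⟩
          calc |h y'| ≤ ∑ x ∈ T.filter (fun x => x i = y' i), |h x| :=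
                Finset.single_le_sum (f := fun x => |h x|) (fun x _ => abs_nonneg _)
                  (Finset.mem_filter.mpr ⟨hy', rfl⟩)
            _ < M / (4 * m) := hc i (y' i) hi
        by_cases hall : ∀ y' ∈ T, ∃ i, 2 * (T.filter fun x => x i = y' i).card ≤ m
        · have hlt : M < ∑ _x ∈ T, M / (4 * m) := by
            conv_lhs => rw [← habs_supp]
            exact Finset.sum_lt_sum_of_nonempty ⟨y, hyT⟩
              (fun x hx => hlight x hx (hall x hx))
          rw [Finset.sum_const, hTc, nsmul_eq_mul] at hlt
          have he : (m:ℝ) * (M / (4 * m)) = M / 4 := by field_simp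
          nlinarith
        · push_neg at hall
          obtain ⟨y₀, hy₀T, hy₀⟩ := hall
          have hrest : ∀ y' ∈ T, y' ≠ y₀ → |h y'| < M / (4 * m) := by
            intro y' hy' hne
            obtain ⟨i, hi⟩ := Function.ne_iff.mp hne
            have hdisj : Disjoint (T.filter fun x => x i = y' i)
                (T.filter fun x => x i = y₀ i) := by
              simp only [Finset.disjoint_left, mem_filter]
              rintro x ⟨_, hx1⟩ ⟨_, hx2⟩
              exact hi (hx1 ▸ hx2 ▸ rfl)
            have hcards : (T.filter fun x => x i = y' i).card
                + (T.filter fun x => x i = y₀ i).card ≤ m := by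
              rw [← Finset.card_union_of_disjoint hdisj, ← hTc]
              exact Finset.card_le_card (Finset.union_subset
                (Finset.filter_subset _ _) (Finset.filter_subset _ _))
            have hbig := hy₀ i
            have h2c : 2 * (T.filter fun x => x i = y' i).card ≤ m := by
              revert hcards hbig
              generalize (T.filter fun x => x i = y' i).card = c1
              generalize (T.filter fun x => x i = y₀ i).card = c2
              intro h1 h2
              omega
            exact hlight y' hy' ⟨i, h2c⟩
          set rest : ℝ := ∑ x ∈ T.erase y₀, |h x| with hrestdef
          have hrest_le : rest ≤ ((m - 1 : ℕ) : ℝ) * (M / (4 * m)) := by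
            have hb := Finset.sum_le_card_nsmul (T.erase y₀) (fun x => |h x|) (M / (4 * m))
              (fun x hx => le_of_lt (hrest x (Finset.mem_of_mem_erase hx)
                (Finset.ne_of_mem_erase hx)))
            rwa [Finset.card_erase_of_mem hy₀T, hTc, nsmul_eq_mul] at hb
          have hm1R : ((m - 1 : ℕ) : ℝ) ≤ (m:ℝ) := by exact_mod_cast Nat.sub_le m 1
          have hrest4 : rest ≤ M / 4 := by
            have h1 : ((m - 1 : ℕ) : ℝ) * (M / (4 * m)) ≤ (m:ℝ) * (M / (4 * m)) := by
              apply mul_le_mul_of_nonneg_right hm1R; positivity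
            have h2 : (m:ℝ) * (M / (4 * m)) = M / 4 := by field_simp
            linarith
          have hMsplit : |h y₀| + rest = M := by
            rw [hrestdef, ← habs_supp]
            exact Finset.add_sum_erase T (fun x => |h x|) hy₀T
          have hSsplit : h y₀ + ∑ x ∈ T.erase y₀, h x = S := by
            rw [← hsum_supp]
            exact Finset.add_sum_erase T h hy₀T
          have habs_rest : |∑ x ∈ T.erase y₀, h x| ≤ rest :=
            Finset.abs_sum_le_sum_abs _ _
          have hSlow : M / 2 ≤ |S| := by
            have h1 : |h y₀| - |∑ x ∈ T.erase y₀, h x| ≤ |S| := by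
              rw [← hSsplit]
              have h2 := abs_add_le (h y₀ + ∑ x ∈ T.erase y₀, h x) (-(∑ x ∈ T.erase y₀, h x))
              simp only [add_neg_cancel_right, abs_neg] at h2
              linarith
            linarith
          have hden8 : (8:ℝ) ≤ (4 * m) ^ L := by
            have hmc : (2:ℝ) ≤ (m:ℝ) := by exact_mod_cast hm2'
            calc (8:ℝ) = 4 * 2 := by norm_num
              _ ≤ 4 * m := by linarith
              _ = (4 * (m:ℝ)) ^ 1 := by ring
              _ ≤ (4 * m) ^ L := by
                  apply pow_le_pow_right₀ (by linarith) hL1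
          have hb8 : M / (4 * m) ^ L ≤ M / 8 :=
            div_le_div_of_nonneg_left (le_of_lt hMpos) (by norm_num) hden8
          linarith
      obtain ⟨i, a, hcard, hmass⟩ := hclaim
      set C : Finset (Fin ℓ → Fin n) := T.filter (fun x => x i = a) with hCdef
      set h' : (Fin ℓ → Fin n) → ℝ := fun x => if x i = a then h x else 0 with h'def
      have hsupp' : (Finset.univ.filter fun x => h' x ≠ 0) = C := by
        ext x
        simp only [hCdef, hTdef, mem_filter, mem_univ, true_and, h'def]
        constructor
        · intro hx
          by_cases hxi : x i = a
          · rw [if_pos hxi] at hx; exact ⟨hx, hxi⟩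
          · rw [if_neg hxi] at hx; exact absurd rfl hx
        · rintro ⟨hx, hxi⟩; rw [if_pos hxi]; exact hx
      set m' : ℕ := C.card with hm'def
      have hCpos : 0 < M / (4 * m) := by positivity
      have hCne : C.Nonempty := by
        rcases Finset.eq_empty_or_nonempty C with hC | hC
        · rw [hC, Finset.sum_empty] at hmass; linarith
        · exact hC
      have hm'1 : 1 ≤ m' := Finset.card_pos.mpr hCne
      have hm'lt : m' < m := by omega
      have hM' : ∑ x : Fin ℓ → Fin n, |h' x| = ∑ x ∈ C, |h x| := by
        have e1 : ∑ x : Fin ℓ → Fin n, |h' x|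
            = ∑ x ∈ Finset.univ.filter (fun x : Fin ℓ → Fin n => x i = a), |h x| := by
          rw [Finset.sum_filter]
          apply Finset.sum_congr rfl
          intro x _
          by_cases hxi : x i = a <;> simp [h'def, hxi]
        rw [e1]
        symm
        apply Finset.sum_subset
        · intro x hx
          simp only [hCdef, hTdef, mem_filter, mem_univ, true_and] at hx ⊢
          exact hx.2
        · intro x hx hxc
          simp only [mem_filter, mem_univ, true_and] at hx
          simp only [hCdef, hTdef, mem_filter, mem_univ, true_and] at hxc
          push_neg at hxc
          rcases ne_or_eq (h x) 0 with h0 | h0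
          · exact absurd hx (hxc h0)
          · simp [h0]
      have hM'mass : M / (4 * m) ≤ ∑ x : Fin ℓ → Fin n, |h' x| := by rw [hM']; exact hmass
      obtain ⟨U', α', hU', hcorr'⟩ := IH m' hm'lt n ℓ h' (by rw [hsupp']) hm'1
      -- positivity of the correlation bound
      have hden'_pos : (0:ℝ) < (4 * m') ^ (Nat.log 2 m') := by positivity
      have hcorr_pos : 0 < (∑ x : Fin ℓ → Fin n, |h' x|) / (4 * m') ^ (Nat.log 2 m') := by
        apply div_pos (lt_of_lt_of_le hCpos hM'mass) hden'_pos
      -- consistency of α' at i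
      have hcons : i ∈ U' → α' i = a := by
        intro hiU'
        by_contra hne
        have hzero : ∑ x ∈ Finset.univ.filter
            (fun x : Fin ℓ → Fin n => ∀ j ∈ U', x j = α' j), h' x = 0 := by
          apply Finset.sum_eq_zero
          intro x hx
          simp only [mem_filter, mem_univ, true_and] at hx
          have : x i ≠ a := by rw [hx i hiU']; exact hne
          simp [h'def, this]
        rw [hzero, abs_zero] at hcorr'
        linarith
      set α : Fin ℓ → Fin n := Function.update α' i a with hαdef
      have hαU' : ∀ j ∈ U', α j = α' j := by
        intro j hj
        by_cases hji : j = i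
        · subst hji; rw [hαdef, Function.update_self, hcons hj]
        · rw [hαdef, Function.update_of_ne hji]
      refine ⟨insert i U', α, ?_, ?_⟩
      · calc (insert i U').card ≤ U'.card + 1 := Finset.card_insert_le _ _
          _ ≤ Nat.log 2 m' + 1 := by omega
          _ = Nat.log 2 (m' * 2) := (Nat.log_mul_base (by norm_num) (by omega)).symm
          _ ≤ Nat.log 2 m := Nat.log_mono_right (by omega)
      · -- sum equality
        have hfilter_eq : Finset.univ.filter (fun x : Fin ℓ → Fin n => ∀ j ∈ insert i U', x j = α j)
            = (Finset.univ.filter (fun x : Fin ℓ → Fin n => ∀ j ∈ U', x j = α' j)).filter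
              (fun x => x i = a) := by
          ext x
          simp only [mem_filter, mem_univ, true_and, Finset.mem_insert]
          constructor
          · intro hx
            refine ⟨fun j hj => ?_, ?_⟩
            · rw [hx j (Or.inr hj)]; exact (hαU' j hj).symm ▸ rfl
            · have := hx i (Or.inl rfl)
              rw [this, hαdef, Function.update_self]
          · rintro ⟨hx, hxi⟩ j hj
            rcases hj with hj | hj
            · subst hj; rw [hxi, hαdef, Function.update_self]
            · rw [hx j hj, hαU' j hj]
          
        have hsum_eq : ∑ x ∈ Finset.univ.filter
              (fun x : Fin ℓ → Fin n => ∀ j ∈ insert i U', x j = α j), h x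
            = ∑ x ∈ Finset.univ.filter
              (fun x : Fin ℓ → Fin n => ∀ j ∈ U', x j = α' j), h' x := by
          have e2 : ∀ s : Finset (Fin ℓ → Fin n),
              ∑ x ∈ s, h' x = ∑ x ∈ s.filter (fun x => x i = a), h x := by
            intro s
            rw [Finset.sum_filter]
          rw [hfilter_eq]
          exact (e2 _).symm
        rw [hsum_eq]
        -- chain of inequalities
        have hstep : M / (4 * m) ^ L ≤
            (∑ x : Fin ℓ → Fin n, |h' x|) / (4 * m') ^ (Nat.log 2 m') := by
          have hL' : Nat.log 2 m' + 1 ≤ L := by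
            calc Nat.log 2 m' + 1 = Nat.log 2 (m' * 2) :=
                  (Nat.log_mul_base (by norm_num) (by omega)).symm
              _ ≤ Nat.log 2 m := Nat.log_mono_right (by omega)
          have hm'R : (m' : ℝ) ≤ (m : ℝ) := by exact_mod_cast le_of_lt hm'lt
          have h4m1 : (1:ℝ) ≤ 4 * m := by nlinarith
          have hpow1 : ((4 * m' : ℝ)) ^ (Nat.log 2 m') ≤ ((4 * m : ℝ)) ^ (Nat.log 2 m') := by
            apply pow_le_pow_left₀ (by positivity) (by linarith)
          have hpow2 : ((4 * m : ℝ)) ^ (Nat.log 2 m' + 1) ≤ ((4 * m : ℝ)) ^ L :=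
            pow_le_pow_right₀ h4m1 hL'
          calc M / (4 * m) ^ L ≤ M / (4 * m) ^ (Nat.log 2 m' + 1) := by
                apply div_le_div_of_nonneg_left (le_of_lt hMpos) (by positivity) hpow2
            _ = (M / (4 * m)) / (4 * m) ^ (Nat.log 2 m') := by
                rw [div_div, pow_succ]; ring_nf
            _ ≤ (∑ x : Fin ℓ → Fin n, |h' x|) / (4 * m) ^ (Nat.log 2 m') := by
                apply div_le_div_of_nonneg_right ?_ (by positivity)
                · exact hM'mass
            _ ≤ (∑ x : Fin ℓ → Fin n, |h' x|) / (4 * m') ^ (Nat.log 2 m') := by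
                apply div_le_div_of_nonneg_left ?_ (by positivity) hpow1
                · positivity
        exact le_trans hstep hcorr'

/-- Small-support functions on `[n]^ℓ` with unit `ℓ₁` norm are correlated with juntas:
there is a set `U` of at most `log₂ k` coordinates and values `α_i` such that the sum of `g`
over inputs agreeing with `α` on `U` has absolute value at least `k^{-C log₂ k}`. -/
theorem small_support_junta_correlation :
    ∃ C : ℝ, 0 < C ∧
      ∀ (n ℓ k : ℕ) (g : (Fin ℓ → Fin n) → ℝ),
        (∑ x : Fin ℓ → Fin n, |g x| = 1) →
        ((Finset.univ.filter fun x : Fin ℓ → Fin n => g x ≠ 0).card ≤ k) →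
        ∃ (U : Finset (Fin ℓ)) (α : Fin ℓ → Fin n),
          (U.card : ℝ) ≤ Real.logb 2 k ∧
          (k : ℝ) ^ (-(C * Real.logb 2 k)) ≤
            |∑ x ∈ Finset.univ.filter (fun x : Fin ℓ → Fin n => ∀ i ∈ U, x i = α i), g x| := by
  refine ⟨3, by norm_num, ?_⟩
  intro n ℓ k g hg1 hk
  have hex : ∃ x, g x ≠ 0 := by
    by_contra hc; push_neg at hc
    simp [hc] at hg1
  have hm1 : 1 ≤ (Finset.univ.filter fun x : Fin ℓ → Fin n => g x ≠ 0).card := by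
    obtain ⟨x, hx⟩ := hex
    exact Finset.card_pos.mpr ⟨x, by simp [hx]⟩
  set m : ℕ := (Finset.univ.filter fun x : Fin ℓ → Fin n => g x ≠ 0).card with hmdef
  obtain ⟨U, α, hU, hcorr⟩ := key m n ℓ g rfl hm1
  have hmk : m ≤ k := hk
  have hk1 : 1 ≤ k := le_trans hm1 hk
  have hk0 : (0:ℝ) ≤ (k:ℝ) := by positivity
  have hkR1 : (1:ℝ) ≤ (k:ℝ) := by exact_mod_cast hk1
  have hRnonneg : 0 ≤ Real.logb 2 k := Real.logb_nonneg (by norm_num) hkR1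
  refine ⟨U, α, ?_, ?_⟩
  · calc (U.card : ℝ) ≤ (Nat.log 2 m : ℝ) := by exact_mod_cast hU
      _ ≤ Real.logb 2 m := Real.natLog_le_logb m 2
      _ ≤ Real.logb 2 k := by
          exact Real.logb_le_logb_of_le (by norm_num)
            (by exact_mod_cast hm1) (by exact_mod_cast hmk)
  · rw [hg1] at hcorr
    refine le_trans ?_ hcorr
    -- (k:ℝ)^(-(3*logb 2 k)) ≤ 1/(4m)^(Nat.log 2 m)
    rcases eq_or_lt_of_le hk1 with hk1' | hk2
    · -- k = 1, so m = 1
      have hm : m = 1 := le_antisymm (hk1' ▸ hmk) hm1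
      rw [← hk1', hm]
      norm_num
    · have hk2' : 2 ≤ k := hk2
      have hkR2 : (2:ℝ) ≤ (k:ℝ) := by exact_mod_cast hk2'
      have hmR1 : (1:ℝ) ≤ (m:ℝ) := by exact_mod_cast hm1
      have hmRk : (m:ℝ) ≤ (k:ℝ) := by exact_mod_cast hmk
      have h1 : ((4 * m : ℝ)) ^ (Nat.log 2 m) ≤ ((4 * k : ℝ)) ^ (Nat.log 2 k) := by
        calc ((4 * m : ℝ)) ^ (Nat.log 2 m) ≤ ((4 * k : ℝ)) ^ (Nat.log 2 m) := by
              apply pow_le_pow_left₀ (by positivity) (by linarith)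
          _ ≤ ((4 * k : ℝ)) ^ (Nat.log 2 k) := by
              apply pow_le_pow_right₀ (by linarith) (Nat.log_mono_right hmk)
      have h2 : ((4 * k : ℝ)) ^ (Nat.log 2 k) ≤ (4 * (k:ℝ)) ^ (Real.logb 2 k) := by
        rw [← Real.rpow_natCast (4 * (k:ℝ)) (Nat.log 2 k)]
        apply Real.rpow_le_rpow_of_exponent_le (by linarith)
        exact Real.natLog_le_logb k 2
      have h3 : (4 * (k:ℝ)) ^ (Real.logb 2 k) ≤ ((k:ℝ) ^ (3:ℝ)) ^ (Real.logb 2 k) := by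
        apply Real.rpow_le_rpow (by positivity) ?_ hRnonneg
        have h33 : (k:ℝ) ^ (3:ℝ) = (k:ℝ) ^ (3:ℕ) := by
          rw [← Real.rpow_natCast (k:ℝ) 3]; norm_num
        rw [h33]
        nlinarith [sq_nonneg ((k:ℝ) - 2), hkR2]
      have h4 : ((k:ℝ) ^ (3:ℝ)) ^ (Real.logb 2 k) = (k:ℝ) ^ (3 * Real.logb 2 k) :=
        (Real.rpow_mul hk0 3 (Real.logb 2 k)).symm
      have hchain : ((4 * m : ℝ)) ^ (Nat.log 2 m) ≤ (k:ℝ) ^ (3 * Real.logb 2 k) := by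
        rw [← h4]; exact le_trans h1 (le_trans h2 h3)
      have hpos : (0:ℝ) < ((4 * m : ℝ)) ^ (Nat.log 2 m) := by positivity
      rw [Real.rpow_neg hk0, ← one_div]
      calc (1:ℝ) / (k:ℝ) ^ (3 * Real.logb 2 k) ≤ 1 / ((4 * m : ℝ)) ^ (Nat.log 2 m) :=
            one_div_le_one_div_of_le hpos hchain
        _ = 1 / ((4 * m : ℝ)) ^ (Nat.log 2 m) := rfl
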